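/- Let d be a distance on X such that X is d-initial, meaning inf_{x∈X} d(x,y) = 0 for all y ∈ X. Then the lower hemimetric of the formal-ball distance equals the formal-ball lift of the lower hemimetric: for all (y,s),(z,t) ∈ X × [0,∞), sup_{(x,r)} (d₊((x,r),(y,s)) − d₊((x,r),(z,t)))₊ = (d̲(z,y) − t + s)₊, where d̲(z,y) = sup_{x∈X} (d(x,y) − d(x,z))₊ and d₊((x,r),(y,s)) = (d(x,y) − r + s)₊. -/

import Mathlib

open ENNReal NNReal Filter Set

/-- If `X` is `d`-initial (`⨅ x, d x y = 0` for all `y`), then the lower hemimetric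
of the formal-ball distance equals the formal-ball lift of the lower hemimetric:
`sup_{(x,r)} (d₊((x,r),(y,s)) − d₊((x,r),(z,t)))₊ = (d̲(z,y) − t + s)₊`, where
`d̲(z,y) = sup_x (d x y − d x z)₊` and `d₊((x,r),(y,s)) = (d x y − r + s)₊`
(truncated subtraction in `ℝ≥0∞`). -/
theorem lower_formalBall {X : Type*} (d : X → X → ℝ≥0∞)
    (htri : ∀ x y z, d x z ≤ d x y + d y z)
    (hinit : ∀ y : X, (⨅ x : X, d x y) = 0) :
    ∀ (y z : X) (s t : ℝ≥0),
      (⨆ p : X × ℝ≥0,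
          (((d p.1 y + (s : ℝ≥0∞)) - (p.2 : ℝ≥0∞)) -
            ((d p.1 z + (t : ℝ≥0∞)) - (p.2 : ℝ≥0∞)))) =
        ((⨆ x : X, d x y - d x z) + (s : ℝ≥0∞)) - (t : ℝ≥0∞) := by
  intro y z s t
  have hne : Nonempty X := ⟨y⟩
  apply le_antisymm
  · refine iSup_le fun p => ?_
    obtain ⟨x, r⟩ := p
    have key : ∀ a b c : ℝ≥0∞, (a - c) - (b - c) ≤ a - b := by
      intro a b c
      rw [tsub_le_iff_right, tsub_le_iff_right]
      calc a ≤ (a - b) + b := le_tsub_add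
        _ ≤ (a - b) + ((b - c) + c) := by gcongr; exact le_tsub_add
        _ = (a - b) + (b - c) + c := by ring
    calc ((d x y + s) - r) - ((d x z + t) - r)
        ≤ (d x y + s) - (d x z + t) := key _ _ _
      _ ≤ ((d x y - d x z) + s) - t := by
          rw [tsub_add_eq_tsub_tsub]
          gcongr
          exact add_tsub_le_tsub_add
      _ ≤ ((⨆ x : X, d x y - d x z) + s) - t := by
          gcongr
          exact le_iSup (fun x => d x y - d x z) x
  · rw [ENNReal.iSup_add, ENNReal.iSup_sub]
    refine iSup_le fun x => ?_
    by_cases hb : d x z ≤ d x y ∧ d x z < ⊤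
    · obtain ⟨hba, hfin⟩ := hb
      set r : ℝ≥0 := (d x z + t).toNNReal with hr
      have hrc : (r : ℝ≥0∞) = d x z + t := coe_toNNReal (by finiteness)
      refine le_trans ?_ (le_iSup _ (⟨x, r⟩ : X × ℝ≥0))
      simp only [hrc, tsub_self, tsub_zero]
      rw [tsub_add_eq_tsub_tsub]
      gcongr
      exact (ENNReal.sub_add_eq_add_sub hba hfin.ne).le
    · have h0 : d x y - d x z = 0 := by
        rcases lt_or_ge (d x y) (d x z) with h | h
        · exact tsub_eq_zero_of_le h.le
        · push_neg at hb
          have htop : d x z = ⊤ := top_le_iff.mp (hb h)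
          have hytop : d x y = ⊤ := top_le_iff.mp (htop ▸ h)
          simp [htop, hytop]
      rw [h0, zero_add]
      refine ENNReal.le_of_forall_pos_le_add fun ε hε _ => ?_
      have hlt : (⨅ x : X, d x z) < (ε : ℝ≥0∞) := by
        rw [hinit z]; exact_mod_cast hε
      obtain ⟨x0, hx0⟩ := iInf_lt_iff.mp hlt
      set r : ℝ≥0 := (d x0 z + t).toNNReal with hr
      have hrc : (r : ℝ≥0∞) = d x0 z + t := coe_toNNReal (by finiteness)
      have hterm : ((d x0 y + s) - (d x0 z + t)) ≤
          ⨆ p : X × ℝ≥0,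
            (((d p.1 y + (s : ℝ≥0∞)) - (p.2 : ℝ≥0∞)) -
              ((d p.1 z + (t : ℝ≥0∞)) - (p.2 : ℝ≥0∞))) := by
        refine le_trans ?_ (le_iSup _ (⟨x0, r⟩ : X × ℝ≥0))
        simp only [hrc, tsub_self, tsub_zero, le_refl]
      have step1 : (s : ℝ≥0∞) - t ≤ ((s : ℝ≥0∞) - (ε + t)) + ε := by
        rw [tsub_le_iff_right]
        calc (s : ℝ≥0∞) ≤ ((s : ℝ≥0∞) - (ε + t)) + (ε + t) := le_tsub_add
          _ = (s : ℝ≥0∞) - (ε + t) + ε + t := by ring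
      have step2 : ((s : ℝ≥0∞) - (ε + t)) ≤ (d x0 y + s) - (d x0 z + t) := by
        have h1 : (s : ℝ≥0∞) - (ε + t) ≤ (s : ℝ≥0∞) - (d x0 z + t) := by
          gcongr
        have h2 : (s : ℝ≥0∞) - (d x0 z + t) ≤ (d x0 y + s) - (d x0 z + t) := by
          gcongr
          exact le_add_self
        exact h1.trans h2
      exact step1.trans (add_le_add_left (step2.trans hterm) _)
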